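/- Let δ ∈ (0,1), let z₁ > 0 satisfy Φ(z₁) = 1 − δ/2, and let S be a random variable on a probability space (Ω, μ) whose law is the centered Gaussian with variance 1/4. Then μ({|S| ≤ z₁}) = 2Φ(2z₁) − 1, and 2Φ(2z₁) − 1 > 1 − δ. Consequently the asymptotic coverage probability of the classical Sobel-type confidence interval CI_Sobel strictly exceeds its nominal level 1 − δ when α = β = 0. -/

import Mathlib

open MeasureTheory ProbabilityTheory Set
open scoped NNReal

lemma aux_nu_singleton (a : ℝ) : gaussianReal 0 1 {a} = 0 :=
  gaussianReal_absolutelyContinuous 0 one_ne_zero Real.volume_singleton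

lemma aux_nu_symm (a : ℝ) : gaussianReal 0 1 (Iic (-a)) = gaussianReal 0 1 (Ici a) := by
  have hmap := gaussianReal_map_const_mul (μ := 0) (v := 1) (-1)
  have h1 : (NNReal.mk ((-1:ℝ)^2) (sq_nonneg _) * 1 : ℝ≥0) = 1 := by
    ext; norm_num
  rw [h1, mul_zero] at hmap
  conv_lhs => rw [← hmap]
  rw [Measure.map_apply (measurable_const_mul (-1:ℝ)) measurableSet_Iic]
  congr 1
  ext x
  simp only [mem_preimage, mem_Iic, mem_Ici]
  constructor <;> intro h <;> nlinarith

lemma aux_nu_Icc {b : ℝ} (hb : 0 ≤ b) :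
    gaussianReal 0 1 (Icc (-b) b)
      = ENNReal.ofReal (2 * (gaussianReal 0 1 (Iic b)).toReal - 1) := by
  set ν := gaussianReal 0 1 with hν
  have hfin : ∀ s : Set ℝ, ν s ≠ ⊤ := fun s => measure_ne_top ν s
  have hIio : ν (Iio (-b)) = ν (Iic (-b)) := by
    have hu : Iic (-b) = Iio (-b) ∪ {-b} := (Iio_union_right (a := -b)).symm
    have hd : Disjoint (Iio (-b)) ({-b} : Set ℝ) := by
      rw [disjoint_left]; rintro x hx rfl; exact lt_irrefl (-b) hx
    rw [hu, measure_union hd (measurableSet_singleton _), aux_nu_singleton, add_zero]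
  have hd1 : Disjoint (Iio (-b)) (Icc (-b) b) := by
    rw [disjoint_left]; intro x hx hx'; exact absurd hx'.1 (not_le.mpr hx)
  have hsplit : ν (Iic b) = ν (Iio (-b)) + ν (Icc (-b) b) := by
    rw [← measure_union hd1 measurableSet_Icc, Iio_union_Icc_eq_Iic (by linarith)]
  have hd2 : Disjoint (Iic b) (Ioi b) := by
    rw [disjoint_left]; intro x hx hx'; exact absurd (mem_Iic.mp hx) (not_le.mpr (mem_Ioi.mp hx'))
  have h2 : ν (Iic b) + ν (Ioi b) = 1 := by
    rw [← measure_union hd2 measurableSet_Ioi, Iic_union_Ioi]; exact measure_univ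
  have h3 : ν (Ici b) = ν (Ioi b) := by
    have hu : Ici b = {b} ∪ Ioi b := by
      ext x; simp only [mem_Ici, mem_union, mem_singleton_iff, mem_Ioi]
      constructor
      · intro h; rcases eq_or_lt_of_le h with h' | h'
        · exact Or.inl h'.symm
        · exact Or.inr h'
      · rintro (rfl | h) <;> [exact le_refl _; exact h.le]
    have hd : Disjoint ({b} : Set ℝ) (Ioi b) := by
      rw [disjoint_left]; rintro x rfl hx'; exact lt_irrefl x (mem_Ioi.mp hx')
    rw [hu, measure_union hd measurableSet_Ioi, aux_nu_singleton, zero_add]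
  have hcomp : ν (Iic (-b)) = 1 - ν (Iic b) := by
    rw [aux_nu_symm, h3]
    exact ENNReal.eq_sub_of_add_eq (hfin _) (by rw [add_comm]; exact h2)
  -- pass to reals
  set p := (ν (Iic b)).toReal with hp
  have hple : ν (Iic b) ≤ 1 := prob_le_one
  have hp01 : p ≤ 1 := by
    rw [hp]
    exact ENNReal.toReal_le_of_le_ofReal zero_le_one (by simpa using hple)
  have hq : (ν (Iic (-b))).toReal = 1 - p := by
    rw [hcomp, ENNReal.toReal_sub_of_le hple (by simp)]
    simp [hp]
  have hIccval : (ν (Icc (-b) b)).toReal = 2 * p - 1 := by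
    have := congrArg ENNReal.toReal hsplit
    rw [ENNReal.toReal_add (hfin _) (hfin _), hIio, hq] at this
    linarith [this]
  rw [← hIccval, ENNReal.ofReal_toReal (hfin _)]

theorem sobel_ci_overcovers_under_H00
    {Ω : Type*} [MeasurableSpace Ω] (μ : Measure Ω) [IsProbabilityMeasure μ]
    (δ z₁ : ℝ) (hδ : δ ∈ Ioo (0:ℝ) 1) (hz₁pos : 0 < z₁)
    (hz₁ : gaussianReal 0 1 (Iic z₁) = ENNReal.ofReal (1 - δ / 2))
    (S : Ω → ℝ) (hS : Measurable S)
    (hlaw : Measure.map S μ = gaussianReal 0 (1/4 : ℝ≥0)) :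
    μ {ω | |S ω| ≤ z₁} =
        ENNReal.ofReal (2 * (gaussianReal 0 1 (Iic (2 * z₁))).toReal - 1) ∧
      1 - δ < 2 * (gaussianReal 0 1 (Iic (2 * z₁))).toReal - 1 := by
  obtain ⟨hδ0, hδ1⟩ := hδ
  set ν := gaussianReal 0 1 with hν
  -- the law of S in terms of ν
  have hmap := gaussianReal_map_const_mul (μ := 0) (v := 1) ((1:ℝ)/2)
  have h1 : (NNReal.mk (((1:ℝ)/2)^2) (sq_nonneg _) * 1 : ℝ≥0) = (1/4 : ℝ≥0) := by
    ext; norm_num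
  rw [h1, mul_zero] at hmap
  have hset : {ω | |S ω| ≤ z₁} = S ⁻¹' Icc (-z₁) z₁ := by
    ext ω
    simp [abs_le]
  have key : μ {ω | |S ω| ≤ z₁} = ν (Icc (-(2*z₁)) (2*z₁)) := by
    rw [hset, ← Measure.map_apply hS measurableSet_Icc, hlaw, ← hmap,
      Measure.map_apply (measurable_const_mul _) measurableSet_Icc]
    congr 1
    ext x
    simp only [mem_preimage, mem_Icc]
    constructor <;> intro h <;> constructor <;> linarith [h.1, h.2]
  have heq := aux_nu_Icc (b := 2*z₁) (by linarith)
  refine ⟨by rw [key, heq], ?_⟩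
  -- strict inequality
  have hlt : ν (Iic z₁) < ν (Iic (2*z₁)) := by
    have hd : Disjoint (Iic z₁) (Ioc z₁ (2*z₁)) := by
      rw [disjoint_left]; intro x hx hx'; exact absurd hx (not_le.mpr hx'.1)
    have hsplit : ν (Iic (2*z₁)) = ν (Iic z₁) + ν (Ioc z₁ (2*z₁)) := by
      rw [← measure_union hd measurableSet_Ioc, Iic_union_Ioc_eq_Iic (by linarith)]
    have hpos : 0 < ν (Ioc z₁ (2*z₁)) := by
      by_contra hc
      push_neg at hc
      have h0 : ν (Ioc z₁ (2*z₁)) = 0 := le_antisymm hc (zero_le (a := ν (Ioc z₁ (2*z₁))))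
      have := gaussianReal_absolutelyContinuous' 0 one_ne_zero h0
      rw [Real.volume_Ioc] at this
      rw [ENNReal.ofReal_eq_zero] at this
      linarith
    calc ν (Iic z₁) < ν (Iic z₁) + ν (Ioc z₁ (2*z₁)) :=
          ENNReal.lt_add_right (measure_ne_top _ _) hpos.ne'
      _ = ν (Iic (2*z₁)) := hsplit.symm
  have hz₁' : (ν (Iic z₁)).toReal = 1 - δ/2 := by
    rw [hz₁, ENNReal.toReal_ofReal (by linarith)]
  have htoReal : (ν (Iic z₁)).toReal < (ν (Iic (2*z₁))).toReal :=
    ENNReal.toReal_lt_toReal (measure_ne_top _ _) (measure_ne_top _ _) |>.mpr hlt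
  rw [hz₁'] at htoReal
  linarith
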